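/- arXiv:2010.04933 — 2 statements merged into one kernel-verified Lean document; each statement's English description precedes it below -/
import Mathlib

section
/- Directly applying the Top Trading Cycle algorithm to a barter exchange network is not incentive compatible with respect to invitations. Concretely: consider the line network with organizer o and agents 1,2,3, with edges o–1, 1–2, 2–3, where each agent i owns good g_i, and the preferences are g3 ≻₁ g2 ≻₁ g1 for agent 1, g1 ≻₂ g3 ≻₂ g2 for agent 2, and g1 ≻₃ g2 ≻₃ g3 for agent 3. When all three agents participate and TTC is run on all goods, agents 1 and 3 form the unique top trading cycle, so agent 2 receives her own good g2. If instead agent 2 does not invite agent 3 (so only agents 1 and 2 are in the market, with preferences restricted to {g1,g2}), TTC matches agents 1 and 2, and agent 2 receives g1, which she strictly prefers to g2. Hence agent 2 strictly gains by withholding an invitation. -/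
/-!
STATEMENT 0: Directly applying TTC to a barter exchange network is not incentive
compatible with respect to invitations, witnessed by the line network
o – 1 – 2 – 3.

We model vertices as `Fin 4` with the organizer `o = 0` and agents `1, 2, 3`;
the good `g_i` is identified with its owner `i`.  Preferences are encoded by a
rank function (`rank i g` smaller means agent `i` prefers good `g` more).
-/

/-- `Desc G o i`: the descendants of `i` (including `i`): vertices `v` such that
every path in `G` from the organizer `o` to `v` passes through `i`. -/
def Desc {V : Type*} (G : SimpleGraph V) (o i : V) : Set V :=
  {v | ∀ p : G.Walk o v, p.IsPath → i ∈ p.support}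

/-- `IsTTCOutcome agents avail rank μ` : `μ` is the matching produced by some
execution of the Top Trading Cycle algorithm on the set `agents` (goods being
identified with their owners), where agent `i` may only point to goods in
`avail i`, and `rank i g` is the position of good `g` in `i`'s strict
preference order (smaller = more preferred).  The witness `round i` records
the round in which agent `i`'s cycle is removed: members of one trading cycle
leave in the same round, each agent receives a good she is allowed to point
to, and her good is her most preferred among the goods of agents still
remaining in her round. -/
def IsTTCOutcome {V : Type*} (agents : Set V) (avail : V → Set V)
    (rank : V → V → ℕ) (μ : V → V) : Prop :=
  ∃ round : V → ℕ,
    Set.MapsTo μ agents agents ∧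
    Set.InjOn μ agents ∧
    (∀ i ∈ agents, μ i ∈ avail i) ∧
    (∀ i ∈ agents, round (μ i) = round i) ∧
    (∀ i ∈ agents, ∀ j ∈ agents, j ∈ avail i → round i ≤ round j →
      rank i (μ i) ≤ rank i j)

/-- The line network `o = 0 – 1 – 2 – 3`. -/
def lineG : SimpleGraph (Fin 4) where
  Adj x y := x.val + 1 = y.val ∨ y.val + 1 = x.val
  symm := ⟨by intro x y h; tauto⟩
  loopless := ⟨by intro x h; omega⟩

/-- Preferences: `g3 ≻₁ g2 ≻₁ g1`, `g1 ≻₂ g3 ≻₂ g2`, `g1 ≻₃ g2 ≻₃ g3`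
(the `0`-entries are dummies for the organizer, who owns no good). -/
def rk : Fin 4 → Fin 4 → ℕ :=
  ![![0, 0, 0, 0], ![9, 2, 1, 0], ![9, 0, 2, 1], ![9, 0, 1, 2]]


lemma line_aux' : ∀ (x y : Fin 4) (p : lineG.Walk x y), y = 3 → x.val < 2 →
    (2 : Fin 4) ∈ p.support := by
  intro x y p
  induction p with
  | nil => rintro rfl h; exact absurd h (by decide)
  | @cons u v w h p ih =>
    rintro rfl hu
    by_cases hv : v = (2 : Fin 4)
    · subst hv
      simp only [SimpleGraph.Walk.support_cons, List.mem_cons]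
      exact Or.inr (SimpleGraph.Walk.start_mem_support p)
    · have h' : u.val + 1 = v.val ∨ v.val + 1 = u.val := h
      have h2 : v.val ≠ 2 := fun hh => hv (Fin.ext hh)
      have hvv : v.val < 2 := by omega
      simp only [SimpleGraph.Walk.support_cons, List.mem_cons]
      exact Or.inr (ih rfl hvv)

lemma line_aux (x : Fin 4) (p : lineG.Walk x 3) (h : x.val < 2) :
    (2 : Fin 4) ∈ p.support := line_aux' x 3 p rfl h

/-- TTC in social networks is not invitation-incentive-compatible:
agent `3` is a descendant of agent `2` (so withholding `2`'s invitation removes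
`3` from the market); when all of `1,2,3` participate every TTC execution
trades `g1 ↔ g3` and leaves agent `2` with her own good `g2`; when only `1,2`
participate every TTC execution gives agent `2` the good `g1`, which she
strictly prefers to `g2`.  Hence agent `2` strictly gains by not inviting. -/
theorem ttc_in_networks_not_invitation_IC :
    -- agent 3 can only be reached through agent 2
    (3 : Fin 4) ∈ Desc lineG 0 2 ∧
    -- full market {1,2,3}: TTC outcomes exist, and in each of them
    -- agents 1 and 3 trade while agent 2 keeps her own good
    (∃ μ : Fin 4 → Fin 4,
      IsTTCOutcome ({1, 2, 3} : Set (Fin 4)) (fun _ => {1, 2, 3}) rk μ) ∧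
    (∀ μ : Fin 4 → Fin 4,
      IsTTCOutcome ({1, 2, 3} : Set (Fin 4)) (fun _ => {1, 2, 3}) rk μ →
        μ 1 = 3 ∧ μ 3 = 1 ∧ μ 2 = 2) ∧
    -- market {1,2} (agent 2 does not invite agent 3): TTC outcomes exist,
    -- and in each of them agents 1 and 2 trade, so agent 2 obtains g1
    (∃ μ : Fin 4 → Fin 4,
      IsTTCOutcome ({1, 2} : Set (Fin 4)) (fun _ => {1, 2}) rk μ) ∧
    (∀ μ : Fin 4 → Fin 4,
      IsTTCOutcome ({1, 2} : Set (Fin 4)) (fun _ => {1, 2}) rk μ →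
        μ 1 = 2 ∧ μ 2 = 1) ∧
    -- agent 2 strictly prefers g1 to g2
    rk 2 1 < rk 2 2 := by
  refine ⟨?_, ?_, ?_, ?_, ?_, by decide⟩
  · -- descendants
    intro p _
    exact line_aux 0 p (by decide)
  · -- existence, full market
    refine ⟨![0, 3, 2, 1], ![0, 0, 1, 0], ?_, ?_, ?_, ?_, ?_⟩
    · intro i hi
      simp only [Set.mem_insert_iff, Set.mem_singleton_iff] at hi ⊢
      rcases hi with rfl | rfl | rfl <;> decide
    · intro i hi j hj hij
      simp only [Set.mem_insert_iff, Set.mem_singleton_iff] at hi hj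
      rcases hi with rfl | rfl | rfl <;> rcases hj with rfl | rfl | rfl <;>
        first | rfl | (exact absurd hij (by decide))
    · intro i hi
      simp only [Set.mem_insert_iff, Set.mem_singleton_iff] at hi ⊢
      rcases hi with rfl | rfl | rfl <;> decide
    · intro i hi
      simp only [Set.mem_insert_iff, Set.mem_singleton_iff] at hi
      rcases hi with rfl | rfl | rfl <;> decide
    · intro i hi j hj _ hrd
      simp only [Set.mem_insert_iff, Set.mem_singleton_iff] at hi hj
      rcases hi with rfl | rfl | rfl <;> rcases hj with rfl | rfl | rfl <;>
        first | decide | (exact absurd hrd (by decide))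
  · -- uniqueness, full market
    rintro μ ⟨round, hmap, hinj, _, hround, hopt⟩
    have m1 : (1 : Fin 4) ∈ ({1, 2, 3} : Set (Fin 4)) := by simp
    have m2 : (2 : Fin 4) ∈ ({1, 2, 3} : Set (Fin 4)) := by simp
    have m3 : (3 : Fin 4) ∈ ({1, 2, 3} : Set (Fin 4)) := by simp
    have hμ1 := hmap m1
    have hμ2 := hmap m2
    have hμ3 := hmap m3
    simp only [Set.mem_insert_iff, Set.mem_singleton_iff] at hμ1 hμ2 hμ3
    have key13 : round 1 ≤ round 3 → μ 1 = 3 := by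
      intro h
      have hle := hopt 1 m1 3 m3 m3 h
      rcases hμ1 with h1 | h1 | h1 <;> rw [h1] at hle ⊢ <;>
        first | rfl | (exact absurd hle (by decide))
    have key31 : round 3 ≤ round 1 → μ 3 = 1 := by
      intro h
      have hle := hopt 3 m3 1 m1 m1 h
      rcases hμ3 with h1 | h1 | h1 <;> rw [h1] at hle ⊢ <;>
        first | rfl | (exact absurd hle (by decide))
    have e13 : μ 1 = 3 ∧ μ 3 = 1 := by
      rcases le_total (round 1) (round 3) with h | h
      · have e1 : μ 1 = 3 := key13 h
        have he : round 3 = round 1 := by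
          have := hround 1 m1; rwa [e1] at this
        exact ⟨e1, key31 he.le⟩
      · have e3 : μ 3 = 1 := key31 h
        have he : round 1 = round 3 := by
          have := hround 3 m3; rwa [e3] at this
        exact ⟨key13 he.le, e3⟩
    obtain ⟨e1, e3⟩ := e13
    refine ⟨e1, e3, ?_⟩
    rcases hμ2 with h2 | h2 | h2
    · have := hinj m2 m3 (by rw [h2, e3])
      exact absurd this (by decide)
    · exact h2
    · have := hinj m2 m1 (by rw [h2, e1])
      exact absurd this (by decide)
  · -- existence, small market
    refine ⟨![0, 2, 1, 0], fun _ => 0, ?_, ?_, ?_, ?_, ?_⟩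
    · intro i hi
      simp only [Set.mem_insert_iff, Set.mem_singleton_iff] at hi ⊢
      rcases hi with rfl | rfl <;> decide
    · intro i hi j hj hij
      simp only [Set.mem_insert_iff, Set.mem_singleton_iff] at hi hj
      rcases hi with rfl | rfl <;> rcases hj with rfl | rfl <;>
        first | rfl | (exact absurd hij (by decide))
    · intro i hi
      simp only [Set.mem_insert_iff, Set.mem_singleton_iff] at hi ⊢
      rcases hi with rfl | rfl <;> decide
    · intro i hi; rfl
    · intro i hi j hj _ _
      simp only [Set.mem_insert_iff, Set.mem_singleton_iff] at hi hj
      rcases hi with rfl | rfl <;> rcases hj with rfl | rfl <;> decide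
  · -- uniqueness, small market
    rintro μ ⟨round, hmap, hinj, _, hround, hopt⟩
    have m1 : (1 : Fin 4) ∈ ({1, 2} : Set (Fin 4)) := by simp
    have m2 : (2 : Fin 4) ∈ ({1, 2} : Set (Fin 4)) := by simp
    have hμ1 := hmap m1
    have hμ2 := hmap m2
    simp only [Set.mem_insert_iff, Set.mem_singleton_iff] at hμ1 hμ2
    have key21 : round 2 ≤ round 1 → μ 2 = 1 := by
      intro h
      have hle := hopt 2 m2 1 m1 m1 h
      rcases hμ2 with h1 | h1 <;> rw [h1] at hle ⊢ <;>
        first | rfl | (exact absurd hle (by decide))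
    have key12 : round 1 ≤ round 2 → μ 1 = 2 := by
      intro h
      have hle := hopt 1 m1 2 m2 m2 h
      rcases hμ1 with h1 | h1 <;> rw [h1] at hle ⊢ <;>
        first | rfl | (exact absurd hle (by decide))
    rcases le_total (round 1) (round 2) with h | h
    · have e1 : μ 1 = 2 := key12 h
      have he : round 2 = round 1 := by
        have := hround 1 m1; rwa [e1] at this
      exact ⟨e1, key21 he.le⟩
    · have e2 : μ 2 = 1 := key21 h
      have he : round 1 = round 2 := by
        have := hround 2 m2; rwa [e2] at this
      exact ⟨key12 he.le, e2⟩
end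

section
/- Directly applying the Top Trading Cycle algorithm to a barter exchange network is not individually rational. Concretely: consider the line network with organizer o and agents 1,2,3, with edges o–1, 1–2, 2–3, where each agent i owns good g_i, and the preferences are g3 ≻₁ g2 ≻₁ g1 for agent 1, g1 ≻₂ g3 ≻₂ g2 for agent 2, and g1 ≻₃ g2 ≻₃ g3 for agent 3. When all three agents participate, TTC gives agent 2 her own good g2. If instead agent 2 does not join the market and exchanges only within her descendant set D₂ = {2,3} (preferences restricted to {g2,g3}), then agents 2 and 3 trade and agent 2 receives g3, which she strictly prefers to g2. Hence participating in the market makes agent 2 strictly worse off. -/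
lemma walk_gen : ∀ {u v : Fin 4} (p : lineG.Walk u v), v = 3 → u.val ≤ 2 → (2:Fin 4) ∈ p.support := by
  intro u v p
  induction p with
  | nil => intro hv hu; subst hv; exact absurd hu (by decide)
  | @cons a b c h q ih =>
    intro hv hu
    by_cases ha : a = 2
    · subst ha; simp
    · have ha' : a.val ≠ 2 := fun hh => ha (Fin.ext hh)
      have hadj : a.val + 1 = b.val ∨ b.val + 1 = a.val := h
      have hb : b.val ≤ 2 := by omega
      simp [SimpleGraph.Walk.support_cons]
      right
      exact ih hv hb

lemma desc_eq : Desc lineG 0 2 = ({2, 3} : Set (Fin 4)) := by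
  ext v
  constructor
  · intro hv
    simp only [Set.mem_insert_iff, Set.mem_singleton_iff]
    by_contra hc
    push_neg at hc
    fin_cases v
    · have := hv SimpleGraph.Walk.nil SimpleGraph.Walk.IsPath.nil
      simp at this
    · have hadj : lineG.Adj 0 1 := Or.inl (by decide)
      have hp : (SimpleGraph.Walk.cons hadj SimpleGraph.Walk.nil).IsPath := by
        simp [SimpleGraph.Walk.cons_isPath_iff]
      have := hv _ hp
      simp [SimpleGraph.Walk.support_cons] at this
    · exact hc.1 rfl
    · exact hc.2 rfl
  · intro hv
    simp only [Set.mem_insert_iff, Set.mem_singleton_iff] at hv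
    rcases hv with hv | hv <;> subst hv
    · intro p _; exact SimpleGraph.Walk.end_mem_support p
    · intro p _; exact walk_gen p rfl (by decide)

-- full market: the uniqueness argument
lemma full_unique (μ : Fin 4 → Fin 4)
    (h : IsTTCOutcome ({1, 2, 3} : Set (Fin 4)) (fun _ => {1, 2, 3}) rk μ) :
    μ 2 = 2 := by
  obtain ⟨round, hmap, hinj, havail, hround, hmax⟩ := h
  have a1 : (1:Fin 4) ∈ ({1,2,3} : Set (Fin 4)) := by simp
  have a2 : (2:Fin 4) ∈ ({1,2,3} : Set (Fin 4)) := by simp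
  have a3 : (3:Fin 4) ∈ ({1,2,3} : Set (Fin 4)) := by simp
  have top1 : round 1 ≤ round 3 → μ 1 = 3 := by
    intro h3
    have k3 := hmax 1 a1 3 a3 a3 h3
    have hm := hmap a1
    simp only [Set.mem_insert_iff, Set.mem_singleton_iff] at hm
    rcases hm with hm | hm | hm
    · rw [hm] at k3; exact absurd k3 (by decide)
    · rw [hm] at k3; exact absurd k3 (by decide)
    · exact hm
  have top2 : round 2 ≤ round 1 → μ 2 = 1 := by
    intro h1
    have k1 := hmax 2 a2 1 a1 a1 h1
    have hm := hmap a2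
    simp only [Set.mem_insert_iff, Set.mem_singleton_iff] at hm
    rcases hm with hm | hm | hm
    · exact hm
    · rw [hm] at k1; exact absurd k1 (by decide)
    · rw [hm] at k1; exact absurd k1 (by decide)
  have top3 : round 3 ≤ round 1 → μ 3 = 1 := by
    intro h1
    have k1 := hmax 3 a3 1 a1 a1 h1
    have hm := hmap a3
    simp only [Set.mem_insert_iff, Set.mem_singleton_iff] at hm
    rcases hm with hm | hm | hm
    · exact hm
    · rw [hm] at k1; exact absurd k1 (by decide)
    · rw [hm] at k1; exact absurd k1 (by decide)
  -- finish from μ 1 = 3 and μ 3 = 1 using injectivity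
  have finish : μ 1 = 3 → μ 3 = 1 → μ 2 = 2 := by
    intro hμ1 hμ3
    have hm := hmap a2
    simp only [Set.mem_insert_iff, Set.mem_singleton_iff] at hm
    rcases hm with hm | hm | hm
    · exact absurd (hinj a2 a3 (hm.trans hμ3.symm)) (by decide)
    · exact hm
    · exact absurd (hinj a2 a1 (hm.trans hμ1.symm)) (by decide)
  by_cases c1 : round 1 ≤ round 2 ∧ round 1 ≤ round 3
  · -- agent 1 minimal
    have hμ1 : μ 1 = 3 := top1 c1.2
    have hr3 : round 3 = round 1 := by rw [← hμ1]; exact hround 1 a1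
    exact finish hμ1 (top3 (by omega))
  · by_cases c3 : round 3 ≤ round 1 ∧ round 3 ≤ round 2
    · -- agent 3 minimal
      have hμ3 : μ 3 = 1 := top3 c3.1
      have hr1 : round 1 = round 3 := by rw [← hμ3]; exact hround 3 a3
      exact finish (top1 (by omega)) hμ3
    · -- agent 2 strictly minimal: contradiction
      push_neg at c1 c3
      have hc2 : round 2 ≤ round 1 ∧ round 2 ≤ round 3 := by omega
      have hμ2 : μ 2 = 1 := top2 hc2.1
      have hr1 : round 1 = round 2 := by rw [← hμ2]; exact hround 2 a2
      have hμ1 : μ 1 = 3 := top1 (by omega)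
      have hr3 : round 3 = round 1 := by rw [← hμ1]; exact hround 1 a1
      have hμ3 : μ 3 = 1 := top3 (by omega)
      exact absurd (hinj a2 a3 (hμ2.trans hμ3.symm)) (by decide)

lemma small_unique (μ : Fin 4 → Fin 4)
    (h : IsTTCOutcome ({2, 3} : Set (Fin 4)) (fun _ => {2, 3}) rk μ) :
    μ 2 = 3 ∧ μ 3 = 2 := by
  obtain ⟨round, hmap, hinj, havail, hround, hmax⟩ := h
  have a2 : (2:Fin 4) ∈ ({2,3} : Set (Fin 4)) := by simp
  have a3 : (3:Fin 4) ∈ ({2,3} : Set (Fin 4)) := by simp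
  have top2 : round 2 ≤ round 3 → μ 2 = 3 := by
    intro h3
    have k3 := hmax 2 a2 3 a3 a3 h3
    have hm := hmap a2
    simp only [Set.mem_insert_iff, Set.mem_singleton_iff] at hm
    rcases hm with hm | hm
    · rw [hm] at k3; exact absurd k3 (by decide)
    · exact hm
  have top3 : round 3 ≤ round 2 → μ 3 = 2 := by
    intro h2
    have k2 := hmax 3 a3 2 a2 a2 h2
    have hm := hmap a3
    simp only [Set.mem_insert_iff, Set.mem_singleton_iff] at hm
    rcases hm with hm | hm
    · exact hm
    · rw [hm] at k2; exact absurd k2 (by decide)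
  rcases le_total (round 2) (round 3) with h23 | h23
  · have hμ2 : μ 2 = 3 := top2 h23
    have hr : round 3 = round 2 := by rw [← hμ2]; exact hround 2 a2
    exact ⟨hμ2, top3 (by omega)⟩
  · have hμ3 : μ 3 = 2 := top3 h23
    have hr : round 2 = round 3 := by rw [← hμ3]; exact hround 3 a3
    exact ⟨top2 (by omega), hμ3⟩

/-- TTC in social networks is not individually rational:
the descendant set of agent `2` is `D₂ = {2, 3}`; when all of `1,2,3`
participate, every TTC execution leaves agent `2` with her own good `g2`;
but exchanging only within `D₂ = {2,3}` (preferences restricted to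
`{g2, g3}`), every TTC execution trades `g2 ↔ g3`, giving agent `2` the good
`g3`, which she strictly prefers to `g2`.  Hence participating in the market
makes agent `2` strictly worse off. -/
theorem ttc_in_networks_not_IR :
    -- the descendant set of agent 2 in the line network is {2, 3}
    Desc lineG 0 2 = ({2, 3} : Set (Fin 4)) ∧
    -- full market {1,2,3}: TTC outcomes exist and each gives agent 2 her own good
    (∃ μ : Fin 4 → Fin 4,
      IsTTCOutcome ({1, 2, 3} : Set (Fin 4)) (fun _ => {1, 2, 3}) rk μ) ∧
    (∀ μ : Fin 4 → Fin 4,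
      IsTTCOutcome ({1, 2, 3} : Set (Fin 4)) (fun _ => {1, 2, 3}) rk μ →
        μ 2 = 2) ∧
    -- trading only inside D₂ = {2,3}: TTC outcomes exist and in each of
    -- them agents 2 and 3 exchange their goods
    (∃ μ : Fin 4 → Fin 4,
      IsTTCOutcome ({2, 3} : Set (Fin 4)) (fun _ => {2, 3}) rk μ) ∧
    (∀ μ : Fin 4 → Fin 4,
      IsTTCOutcome ({2, 3} : Set (Fin 4)) (fun _ => {2, 3}) rk μ →
        μ 2 = 3 ∧ μ 3 = 2) ∧
    -- agent 2 strictly prefers g3 to g2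
    rk 2 3 < rk 2 2 := by
  refine ⟨desc_eq, ?_, full_unique, ?_, small_unique, by simp [rk]⟩
  · refine ⟨![0, 3, 2, 1], ![0, 0, 1, 0], ?_, ?_, ?_, ?_, ?_⟩
    · intro i hi
      simp only [Set.mem_insert_iff, Set.mem_singleton_iff] at hi ⊢
      rcases hi with h | h | h <;> subst h <;> decide
    · intro i hi j hj hij
      simp only [Set.mem_insert_iff, Set.mem_singleton_iff] at hi hj
      rcases hi with h | h | h <;> rcases hj with h' | h' | h' <;> subst h <;> subst h' <;>
        first | rfl | (exfalso; revert hij; decide)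
    · intro i hi
      simp only [Set.mem_insert_iff, Set.mem_singleton_iff] at hi ⊢
      rcases hi with h | h | h <;> subst h <;> decide
    · intro i hi
      simp only [Set.mem_insert_iff, Set.mem_singleton_iff] at hi
      rcases hi with h | h | h <;> subst h <;> decide
    · intro i hi j hj hji hr
      simp only [Set.mem_insert_iff, Set.mem_singleton_iff] at hi hj
      rcases hi with h | h | h <;> rcases hj with h' | h' | h' <;> subst h <;> subst h' <;>
        (revert hr; decide)
  · refine ⟨![0, 0, 3, 2], fun _ => 0, ?_, ?_, ?_, ?_, ?_⟩
    · intro i hi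
      simp only [Set.mem_insert_iff, Set.mem_singleton_iff] at hi ⊢
      rcases hi with h | h <;> subst h <;> decide
    · intro i hi j hj hij
      simp only [Set.mem_insert_iff, Set.mem_singleton_iff] at hi hj
      rcases hi with h | h <;> rcases hj with h' | h' <;> subst h <;> subst h' <;>
        first | rfl | (exfalso; revert hij; decide)
    · intro i hi
      simp only [Set.mem_insert_iff, Set.mem_singleton_iff] at hi ⊢
      rcases hi with h | h <;> subst h <;> decide
    · intro i hi
      simp only [Set.mem_insert_iff, Set.mem_singleton_iff] at hi
      rcases hi with h | h <;> subst h <;> rfl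
    · intro i hi j hj hji hr
      simp only [Set.mem_insert_iff, Set.mem_singleton_iff] at hi hj
      rcases hi with h | h <;> rcases hj with h' | h' <;> subst h <;> subst h' <;> decide
end
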